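/- Let G be a finite directed graph with independence number α (computed after ignoring edge directions) and let I_v denote the in-degree of vertex v. Then ∑_{v ∈ V} 1/(1 + I_v) ≤ 2α · ln(1 + |V|/α). -/

import Mathlib

open Finset

namespace AlonLemma10

variable {V : Type*} [DecidableEq V]

/-- undirected degree of `v` within `T`. -/
def dT (A : V → V → Prop) [DecidableRel A] (T : Finset V) (v : V) : ℕ :=
  (T.filter (fun u => u ≠ v ∧ (A u v ∨ A v u))).card

theorem caroWei (A : V → V → Prop) [DecidableRel A] :
    ∀ (β : ℕ) (T : Finset V),
      (∀ S ⊆ T, (∀ v ∈ S, ∀ w ∈ S, v ≠ w → ¬ A v w ∧ ¬ A w v) → S.card ≤ β) →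
      ∑ v ∈ T, (1 : ℝ) / (1 + dT A T v) ≤ β := by
  intro β
  induction β with
  | zero =>
    intro T h
    have hT : T = ∅ := by
      by_contra hne
      obtain ⟨v, hv⟩ := Finset.nonempty_iff_ne_empty.mpr hne
      have := h {v} (Finset.singleton_subset_iff.mpr hv) (by simp)
      simp at this
    simp [hT]
  | succ β ih =>
    intro T hT
    rcases T.eq_empty_or_nonempty with rfl | hne
    · simp
      positivity
    obtain ⟨v, hv, hmin⟩ := T.exists_min_image (dT A T) hne
    classical
    set p : V → Prop := fun u => u = v ∨ A u v ∨ A v u with hp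
    have hsplit := Finset.sum_filter_add_sum_filter_not T p
      (fun u => (1 : ℝ) / (1 + dT A T u))
    have hNcard : (T.filter p).card = 1 + dT A T v := by
      have hins : T.filter p = insert v (T.filter (fun u => u ≠ v ∧ (A u v ∨ A v u))) := by
        ext u
        simp only [mem_filter, mem_insert, hp]
        constructor
        · rintro ⟨hu, (rfl | h)⟩
          · exact Or.inl rfl
          · by_cases huv : u = v
            · exact Or.inl huv
            · exact Or.inr ⟨hu, huv, h⟩
        · rintro (rfl | ⟨hu, _, h⟩)
          · exact ⟨hv, Or.inl rfl⟩
          · exact ⟨hu, Or.inr h⟩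
      rw [hins, Finset.card_insert_of_notMem (by simp), dT]
      omega
    have hdvpos : (0 : ℝ) < 1 + dT A T v := by positivity
    have h1 : ∑ u ∈ T.filter p, (1 : ℝ) / (1 + dT A T u) ≤ 1 := by
      have hle : ∀ u ∈ T.filter p,
          (1 : ℝ) / (1 + dT A T u) ≤ 1 / (1 + dT A T v) := by
        intro u hu
        have hu' := (Finset.mem_filter.mp hu).1
        have hmm := hmin u hu'
        have hmm' : (dT A T v : ℝ) ≤ dT A T u := by exact_mod_cast hmm
        apply one_div_le_one_div_of_le hdvpos
        linarith
      calc ∑ u ∈ T.filter p, (1 : ℝ) / (1 + dT A T u)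
          ≤ (T.filter p).card • ((1 : ℝ) / (1 + dT A T v)) :=
            Finset.sum_le_card_nsmul _ _ _ hle
        _ = 1 := by
            rw [nsmul_eq_mul, hNcard]
            push_cast
            field_simp
    set T' := T.filter (fun u => ¬ p u) with hT'
    have hsub : T' ⊆ T := Finset.filter_subset _ _
    have hβ : ∀ S ⊆ T', (∀ x ∈ S, ∀ w ∈ S, x ≠ w → ¬ A x w ∧ ¬ A w x) → S.card ≤ β := by
      intro S hS hind
      have hnp : ∀ w ∈ S, w ≠ v ∧ ¬ A w v ∧ ¬ A v w := by
        intro w hw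
        have := (Finset.mem_filter.mp (hS hw)).2
        simp only [hp] at this
        push_neg at this
        exact this
      have hvS : v ∉ S := fun hvS => (hnp v hvS).1 rfl
      have hins2' : insert v S ⊆ T := by
        intro x hx
        rcases Finset.mem_insert.mp hx with rfl | hx'
        · exact hv
        · exact hsub (hS hx')
      have hcard : (insert v S).card ≤ β + 1 := by
        apply hT _ hins2'
        intro x hx w hw hxw
        rcases Finset.mem_insert.mp hx with rfl | hx' <;>
          rcases Finset.mem_insert.mp hw with rfl | hw'
        · exact absurd rfl hxw
        · exact ⟨(hnp w hw').2.2, (hnp w hw').2.1⟩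
        · exact ⟨(hnp x hx').2.1, (hnp x hx').2.2⟩
        · exact hind x hx' w hw' hxw
      rw [Finset.card_insert_of_notMem hvS] at hcard
      omega
    have hins2 : insert v T' ⊆ T := by
      intro x hx
      rcases Finset.mem_insert.mp hx with rfl | hx'
      · exact hv
      · exact hsub hx'
    have h2 : ∑ u ∈ T', (1 : ℝ) / (1 + dT A T u) ≤ β := by
      refine le_trans (Finset.sum_le_sum ?_) (ih T' hβ)
      intro u hu
      have hcard : dT A T' u ≤ dT A T u :=
        Finset.card_le_card (Finset.filter_subset_filter _ hsub)
      have hcard' : (dT A T' u : ℝ) ≤ dT A T u := by exact_mod_cast hcard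
      have : (0 : ℝ) < 1 + dT A T' u := by positivity
      apply one_div_le_one_div_of_le this
      linarith
    rw [← hsplit]
    push_cast
    linarith

theorem exists_high [Fintype V] (A : V → V → Prop) [DecidableRel A] (α : ℕ)
    (hub : ∀ S : Finset V,
      (∀ v ∈ S, ∀ w ∈ S, v ≠ w → ¬ A v w ∧ ¬ A w v) → S.card ≤ α)
    (T : Finset V) (hne : T.Nonempty) :
    ∃ v ∈ T, (T.card : ℝ) ≤
      α * (1 + 2 * ((Finset.univ.filter (fun u => A u v)).card : ℝ)) := by
  classical
  by_contra hcon
  push_neg at hcon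
  have hcw := caroWei A α T (fun S hS h => hub S h)
  have hpos : ∀ v ∈ T, (0 : ℝ) < 1 + dT A T v := fun v _ => by positivity
  have hsed := Finset.sq_sum_div_le_sum_sq_div T (fun _ => (1 : ℝ)) hpos
  simp only [one_pow, Finset.sum_const, nsmul_eq_mul, mul_one] at hsed
  have hDpos : (0 : ℝ) < ∑ v ∈ T, (1 + (dT A T v : ℝ)) := by
    apply Finset.sum_pos (fun v hv => hpos v hv) hne
  have hCS : (T.card : ℝ) ^ 2 ≤ α * ∑ v ∈ T, (1 + (dT A T v : ℝ)) := by
    have h1 : (T.card : ℝ) ^ 2 / ∑ v ∈ T, (1 + (dT A T v : ℝ)) ≤ α :=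
      le_trans hsed hcw
    calc (T.card : ℝ) ^ 2
        = ((T.card : ℝ) ^ 2 / ∑ v ∈ T, (1 + (dT A T v : ℝ))) *
            ∑ v ∈ T, (1 + (dT A T v : ℝ)) := by field_simp
      _ ≤ α * ∑ v ∈ T, (1 + (dT A T v : ℝ)) :=
          mul_le_mul_of_nonneg_right h1 hDpos.le
  -- degree sum bound
  have hdeg : ∀ v ∈ T, dT A T v ≤ (T.filter (fun u => A u v)).card +
      (T.filter (fun u => A v u)).card := by
    intro v _
    have hss : T.filter (fun u => u ≠ v ∧ (A u v ∨ A v u)) ⊆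
        T.filter (fun u => A u v) ∪ T.filter (fun u => A v u) := by
      intro u hu
      simp only [mem_filter, mem_union] at *
      tauto
    exact (Finset.card_le_card hss).trans (Finset.card_union_le _ _)
  have hswap : ∑ v ∈ T, (T.filter (fun u => A v u)).card =
      ∑ v ∈ T, (T.filter (fun u => A u v)).card := by
    simp only [Finset.card_filter]
    exact Finset.sum_comm
  have hglob : ∀ v ∈ T, (T.filter (fun u => A u v)).card ≤
      (Finset.univ.filter (fun u => A u v)).card := by
    intro v _
    exact Finset.card_le_card (Finset.filter_subset_filter _ (Finset.subset_univ T))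
  have hdsum : ∑ v ∈ T, dT A T v ≤
      2 * ∑ v ∈ T, (Finset.univ.filter (fun u => A u v)).card := by
    calc ∑ v ∈ T, dT A T v
        ≤ ∑ v ∈ T, ((T.filter (fun u => A u v)).card +
            (T.filter (fun u => A v u)).card) := Finset.sum_le_sum hdeg
      _ = 2 * ∑ v ∈ T, (T.filter (fun u => A u v)).card := by
          rw [Finset.sum_add_distrib, hswap]; ring
      _ ≤ 2 * ∑ v ∈ T, (Finset.univ.filter (fun u => A u v)).card := by
          have := Finset.sum_le_sum hglob
          omega
  have hdsum' : (∑ v ∈ T, (dT A T v : ℝ)) ≤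
      2 * ∑ v ∈ T, ((Finset.univ.filter (fun u => A u v)).card : ℝ) := by
    push_cast
    exact_mod_cast hdsum
  have hbig : (T.card : ℝ) ^ 2 ≤
      ∑ v ∈ T, (α : ℝ) * (1 + 2 * ((Finset.univ.filter (fun u => A u v)).card : ℝ)) := by
    have heq : ∑ v ∈ T, (α : ℝ) * (1 + 2 * ((Finset.univ.filter (fun u => A u v)).card : ℝ))
        = α * (T.card + 2 * ∑ v ∈ T, ((Finset.univ.filter (fun u => A u v)).card : ℝ)) := by
      simp only [mul_add, mul_one, Finset.sum_add_distrib, Finset.sum_const,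
        nsmul_eq_mul, ← Finset.mul_sum]
      ring
    rw [heq]
    refine hCS.trans ?_
    apply mul_le_mul_of_nonneg_left _ (Nat.cast_nonneg α)
    rw [Finset.sum_add_distrib]
    simp only [Finset.sum_const, nsmul_eq_mul, mul_one]
    linarith
  have hlt : ∑ v ∈ T, (α : ℝ) * (1 + 2 * ((Finset.univ.filter (fun u => A u v)).card : ℝ))
      < ∑ v ∈ T, (T.card : ℝ) :=
    Finset.sum_lt_sum_of_nonempty hne (fun v hv => hcon v hv)
  simp only [Finset.sum_const, nsmul_eq_mul] at hlt
  nlinarith [hbig, hlt]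

theorem harmonic_bound (a : ℕ) (ha : 0 < a) (n : ℕ) :
    ∑ i ∈ Finset.range n, (1 : ℝ) / (a + i + 1) ≤
      Real.log (a + n) - Real.log a := by
  have key : ∀ i : ℕ, (1 : ℝ) / (a + i + 1) ≤
      Real.log (a + (i + 1 : ℕ)) - Real.log (a + i) := by
    intro i
    have h1 : (0 : ℝ) < a + i := by positivity
    have h2 : (0 : ℝ) < (a : ℝ) + i + 1 := by positivity
    have hlog := Real.log_le_sub_one_of_pos (x := ((a : ℝ) + i) / ((a : ℝ) + i + 1))
      (by positivity)
    rw [Real.log_div h1.ne' h2.ne'] at hlog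
    have heq : ((a : ℝ) + i) / ((a : ℝ) + i + 1) - 1 = -(1 / ((a : ℝ) + i + 1)) := by
      field_simp
      ring
    rw [heq] at hlog
    push_cast
    have hassoc : (a : ℝ) + ((i : ℝ) + 1) = (a : ℝ) + (i : ℝ) + 1 := by ring
    rw [hassoc]
    linarith
  calc ∑ i ∈ Finset.range n, (1 : ℝ) / (a + i + 1)
      ≤ ∑ i ∈ Finset.range n,
          (Real.log (a + (i + 1 : ℕ)) - Real.log (a + i)) :=
        Finset.sum_le_sum (fun i _ => key i)
    _ = Real.log (a + n) - Real.log (a + (0 : ℕ)) :=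
        Finset.sum_range_sub (fun i : ℕ => Real.log (a + i)) n
    _ = Real.log (a + n) - Real.log a := by norm_num

end AlonLemma10

/-- Lemma 10 of Alon et al. 2013: for a finite directed graph with
independence number `α` (computed in the underlying undirected graph),
`∑_v 1/(1 + I_v) ≤ 2 α ln(1 + |V|/α)`, where `I_v` is the in-degree of `v`. -/
theorem sum_inv_one_add_indegree_le
    {V : Type*} [Fintype V] (A : V → V → Prop) [DecidableRel A] (α : ℕ)
    (hmax : ∃ S : Finset V,
      (∀ v ∈ S, ∀ w ∈ S, v ≠ w → ¬ A v w ∧ ¬ A w v) ∧ S.card = α)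
    (hub : ∀ S : Finset V,
      (∀ v ∈ S, ∀ w ∈ S, v ≠ w → ¬ A v w ∧ ¬ A w v) → S.card ≤ α) :
    ∑ v : V, (1 : ℝ) / (1 + (Finset.univ.filter (fun u => A u v)).card)
      ≤ 2 * α * Real.log (1 + (Fintype.card V : ℝ) / α) := by
  classical
  rcases Nat.eq_zero_or_pos (Fintype.card V) with hn | hn
  · have hempty : IsEmpty V := Fintype.card_eq_zero_iff.mp hn
    obtain ⟨S, _, hScard⟩ := hmax
    have hS : S = ∅ := Finset.eq_empty_of_isEmpty S
    have hα : α = 0 := by rw [← hScard, hS, Finset.card_empty]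
    subst hα
    simp [Finset.univ_eq_empty]
  · have hα : 0 < α := by
      obtain ⟨v⟩ := Fintype.card_pos_iff.mp hn
      have := hub {v} (by
        intro x hx w hw hxw
        simp only [Finset.mem_singleton] at hx hw
        subst hx; subst hw
        exact absurd rfl hxw)
      simp at this
      omega
    set n := Fintype.card V with hndef
    set I : V → ℕ := fun v => (Finset.univ.filter (fun u => A u v)).card with hI
    let e : Fin n ≃ V := (Fintype.equivFin V).symm
    let σ : Equiv.Perm (Fin n) := Tuple.sort (fun i => I (e i))
    have hmono : Monotone ((fun i => I (e i)) ∘ σ) := Tuple.monotone_sort _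
    set g : Fin n → ℕ := fun i => I (e (σ i)) with hg
    have hkey : ∀ i : Fin n, ((i : ℕ) + 1 : ℝ) ≤ α * (1 + 2 * (g i : ℝ)) := by
      intro i
      set T : Finset V := (Finset.Iic i).image (fun j => e (σ j)) with hT
      have hinj : Function.Injective (fun j : Fin n => e (σ j)) := by
        intro a b hab
        exact σ.injective (e.injective hab)
      have hcard : T.card = (i : ℕ) + 1 := by
        rw [hT, Finset.card_image_of_injective _ hinj, Fin.card_Iic]
      have hneT : T.Nonempty :=
        ⟨e (σ i), Finset.mem_image_of_mem _ (Finset.mem_Iic.mpr le_rfl)⟩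
      obtain ⟨v, hv, hvb⟩ := AlonLemma10.exists_high A α hub T hneT
      obtain ⟨j, hj, rfl⟩ := Finset.mem_image.mp hv
      have hji : I (e (σ j)) ≤ g i := hmono (Finset.mem_Iic.mp hj)
      rw [hcard] at hvb
      have hji' : (I (e (σ j)) : ℝ) ≤ (g i : ℝ) := by exact_mod_cast hji
      have hαnn : (0 : ℝ) ≤ α := Nat.cast_nonneg α
      push_cast at hvb ⊢
      nlinarith
    have hterm : ∀ i : Fin n, (1 : ℝ) / (1 + (g i : ℝ)) ≤ 2 * α / (α + i + 1) := by
      intro i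
      have h1 : (0 : ℝ) < 1 + (g i : ℝ) := by positivity
      have h2 : (0 : ℝ) < (α : ℝ) + i + 1 := by positivity
      rw [div_le_div_iff₀ h1 h2]
      have := hkey i
      nlinarith
    have hsum : ∑ v : V, (1 : ℝ) / (1 + (I v : ℝ)) =
        ∑ i : Fin n, (1 : ℝ) / (1 + (g i : ℝ)) := by
      rw [← Equiv.sum_comp (σ.trans e) (fun v => (1 : ℝ) / (1 + (I v : ℝ)))]
      rfl
    have hα' : (0 : ℝ) < α := by exact_mod_cast hα
    calc ∑ v : V, (1 : ℝ) / (1 + (I v : ℝ))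
        = ∑ i : Fin n, (1 : ℝ) / (1 + (g i : ℝ)) := hsum
      _ ≤ ∑ i : Fin n, 2 * (α : ℝ) / ((α : ℝ) + (i : ℕ) + 1) :=
          Finset.sum_le_sum (fun i _ => hterm i)
      _ = 2 * (α : ℝ) * ∑ i ∈ Finset.range n, (1 : ℝ) / ((α : ℝ) + i + 1) := by
          rw [Fin.sum_univ_eq_sum_range (fun i => 2 * (α : ℝ) / ((α : ℝ) + i + 1)) n,
            Finset.mul_sum]
          exact Finset.sum_congr rfl fun i _ => (mul_one_div _ _).symm
      _ ≤ 2 * α * (Real.log (α + n) - Real.log α) := by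
          apply mul_le_mul_of_nonneg_left (AlonLemma10.harmonic_bound α hα n)
          positivity
      _ = 2 * α * Real.log (1 + (n : ℝ) / α) := by
          rw [← Real.log_div (by positivity) hα'.ne']
          congr 2
          field_simp
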